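/- Let T_M > 0, T⁰ ∈ (T_M, 2T_M), ρ⁰ > 0, ū⁰ ∈ ℝ², β ≥ 0 and 0 < ζ < 1/(4T_M). Define k₁(v,u) = |v−u|·√(μ₀(v))·√(μ₀(u)) and k_{M,1}(v,u) = k₁(v,u)·√(μ₀(v)·μ_M(u))/√(μ₀(u)·μ_M(v)). Then there exists a constant C > 0 such that for all v ∈ ℝ²: ∫_{ℝ²} k_{M,1}(v,u)·e^{ζ(|u|²−|v|²)}·(1+|u|²)^{β/2}·(1+|v|²)^{−β/2} du ≤ C·(1+|v|)^{−1}. -/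

import Mathlib

open MeasureTheory

/-- Local Maxwellian with density `ρ0`, temperature `T0` and bulk velocity `u0`. -/
noncomputable def mu0 (ρ0 T0 : ℝ) (u0 : ℝ × ℝ) (v : ℝ × ℝ) : ℝ :=
  (ρ0 / (2 * Real.pi * T0)) *
    Real.exp (-((v.1 - u0.1) ^ 2 + (v.2 - u0.2) ^ 2) / (2 * T0))

/-- Global Maxwellian with temperature `TM`. -/
noncomputable def muM (TM : ℝ) (v : ℝ × ℝ) : ℝ :=
  (1 / (2 * Real.pi * TM)) * Real.exp (-(v.1 ^ 2 + v.2 ^ 2) / (2 * TM))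

/-- Loss part of the 2D hard-sphere linearized collision kernel. -/
noncomputable def k1 (ρ0 T0 : ℝ) (u0 : ℝ × ℝ) (v u : ℝ × ℝ) : ℝ :=
  Real.sqrt ((v.1 - u.1) ^ 2 + (v.2 - u.2) ^ 2) *
    Real.sqrt (mu0 ρ0 T0 u0 v) * Real.sqrt (mu0 ρ0 T0 u0 u)

/-- Global-Maxwellian rescaling of the loss kernel `k₁`. -/
noncomputable def kM1 (ρ0 T0 TM : ℝ) (u0 : ℝ × ℝ) (v u : ℝ × ℝ) : ℝ :=
  k1 ρ0 T0 u0 v u *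
    Real.sqrt (mu0 ρ0 T0 u0 v * muM TM u) / Real.sqrt (mu0 ρ0 T0 u0 u * muM TM v)

set_option maxHeartbeats 1000000

lemma lin_le_exp {δ : ℝ} (hδ : 0 < δ) {z : ℝ} (hz : 0 ≤ z) :
    1 + z ≤ max 1 δ⁻¹ * Real.exp (δ * z) := by
  have h1 : 1 + δ * z ≤ Real.exp (δ * z) := by
    have := Real.add_one_le_exp (δ * z); linarith
  have hM1 : (1:ℝ) ≤ max 1 δ⁻¹ := le_max_left _ _
  have hMδ : 1 ≤ max 1 δ⁻¹ * δ := by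
    have := mul_le_mul_of_nonneg_right (le_max_right 1 δ⁻¹) hδ.le
    rwa [inv_mul_cancel₀ hδ.ne'] at this
  have h2 : 1 + z ≤ max 1 δ⁻¹ * (1 + δ * z) := by
    have h := mul_le_mul_of_nonneg_right hMδ hz
    rw [one_mul] at h
    have h' : max 1 δ⁻¹ * δ * z = max 1 δ⁻¹ * (δ * z) := by ring
    rw [h'] at h
    have expand : max 1 δ⁻¹ * (1 + δ * z) = max 1 δ⁻¹ + max 1 δ⁻¹ * (δ * z) := by ring
    rw [expand]
    linarith
  calc 1 + z ≤ max 1 δ⁻¹ * (1 + δ * z) := h2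
    _ ≤ max 1 δ⁻¹ * Real.exp (δ * z) :=
        mul_le_mul_of_nonneg_left h1 (by positivity)

lemma rpow_le_exp' {γ δ : ℝ} (hγ : 0 ≤ γ) (hδ : 0 < δ) {z : ℝ} (hz : 0 ≤ z) :
    (1 + z) ^ γ ≤ (max 1 δ⁻¹) ^ γ * Real.exp (δ * z * γ) := by
  have h0 : (0:ℝ) ≤ 1 + z := by linarith
  calc (1 + z) ^ γ ≤ (max 1 δ⁻¹ * Real.exp (δ * z)) ^ γ :=
        Real.rpow_le_rpow h0 (lin_le_exp hδ hz) hγ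
    _ = (max 1 δ⁻¹) ^ γ * Real.exp (δ * z * γ) := by
        rw [Real.mul_rpow (by positivity) (Real.exp_pos _).le, ← Real.exp_mul]

lemma quad_bound {b p : ℝ} (hb : 0 < b) (hpb : 0 ≤ p + b) (w m : ℝ) :
    p * w ^ 2 - (p + b) * (w - m) ^ 2 ≤
      -(b / 2) * w ^ 2 + 2 * (p + b) ^ 2 * m ^ 2 / b := by
  refine (mul_le_mul_iff_right₀ hb).mp ?_
  have expand : b * (-(b / 2) * w ^ 2 + 2 * (p + b) ^ 2 * m ^ 2 / b) =
      -(b ^ 2 / 2) * w ^ 2 + 2 * (p + b) ^ 2 * m ^ 2 := by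
    field_simp
  rw [expand]
  linarith [sq_nonneg (b * w - 2 * (p + b) * m),
    mul_nonneg (mul_nonneg hb.le hpb) (sq_nonneg m)]

lemma mu0_pos {ρ0 T0 : ℝ} (hρ0 : 0 < ρ0) (hT0 : 0 < T0) (u0 v : ℝ × ℝ) :
    0 < mu0 ρ0 T0 u0 v :=
  mul_pos (div_pos hρ0 (by positivity)) (Real.exp_pos _)

lemma muM_pos {TM : ℝ} (hTM : 0 < TM) (v : ℝ × ℝ) : 0 < muM TM v :=
  mul_pos (by positivity) (Real.exp_pos _)

lemma kM1_eq {ρ0 T0 TM : ℝ} (hρ0 : 0 < ρ0) (hT0 : 0 < T0) (hTM : 0 < TM)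
    (u0 v u : ℝ × ℝ) :
    kM1 ρ0 T0 TM u0 v u =
      Real.sqrt ((v.1 - u.1) ^ 2 + (v.2 - u.2) ^ 2) * mu0 ρ0 T0 u0 v *
        Real.exp (((v.1 ^ 2 + v.2 ^ 2) - (u.1 ^ 2 + u.2 ^ 2)) / (4 * TM)) := by
  have hAv := mu0_pos hρ0 hT0 u0 v
  have hAu := mu0_pos hρ0 hT0 u0 u
  have hc : (0:ℝ) < 1 / (2 * Real.pi * TM) := by positivity
  unfold kM1 k1 muM
  rw [Real.sqrt_mul hAv.le, Real.sqrt_mul hAu.le,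
    Real.sqrt_mul hc.le, Real.sqrt_mul hc.le, ← Real.exp_half, ← Real.exp_half]
  have h1 : Real.sqrt (mu0 ρ0 T0 u0 v) * Real.sqrt (mu0 ρ0 T0 u0 v) = mu0 ρ0 T0 u0 v :=
    Real.mul_self_sqrt hAv.le
  have h2 : Real.sqrt (mu0 ρ0 T0 u0 u) ≠ 0 := (Real.sqrt_pos.mpr hAu).ne'
  have h3 : Real.sqrt (1 / (2 * Real.pi * TM)) ≠ 0 := (Real.sqrt_pos.mpr hc).ne'
  have h4 : Real.exp (-(v.1 ^ 2 + v.2 ^ 2) / (2 * TM) / 2) ≠ 0 := (Real.exp_pos _).ne'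
  have key : Real.exp (-(u.1 ^ 2 + u.2 ^ 2) / (2 * TM) / 2) =
      Real.exp ((v.1 ^ 2 + v.2 ^ 2 - (u.1 ^ 2 + u.2 ^ 2)) / (4 * TM)) *
        Real.exp (-(v.1 ^ 2 + v.2 ^ 2) / (2 * TM) / 2) := by
    rw [← Real.exp_add]; congr 1; field_simp; ring
  rw [key]
  field_simp
  rw [Real.sq_sqrt hAv.le]

lemma master (TM T0 ρ0 : ℝ) (u0 : ℝ × ℝ) (β ζ : ℝ)
    (hTM : 0 < TM) (hT0 : TM < T0) (hT0' : T0 < 2 * TM) (hρ0 : 0 < ρ0)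
    (hβ : 0 ≤ β) (hζ0 : 0 < ζ) (hζ : ζ < 1 / (4 * TM)) :
    ∃ C0 > 0, ∀ v u : ℝ × ℝ,
      kM1 ρ0 T0 TM u0 v u *
          Real.exp (ζ * ((u.1 ^ 2 + u.2 ^ 2) - (v.1 ^ 2 + v.2 ^ 2))) *
          (1 + (u.1 ^ 2 + u.2 ^ 2)) ^ (β / 2) *
          (1 + (v.1 ^ 2 + v.2 ^ 2)) ^ (-(β / 2)) ≤
        C0 * (1 + Real.sqrt (v.1 ^ 2 + v.2 ^ 2))⁻¹ *
          (Real.exp (-((1 / (4 * TM) - ζ) / 2) * u.1 ^ 2) *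
            Real.exp (-((1 / (4 * TM) - ζ) / 2) * u.2 ^ 2)) := by
  have hT0pos : 0 < T0 := hTM.trans hT0
  set a : ℝ := 1 / (4 * TM) - ζ with ha_def
  have ha : 0 < a := sub_pos.mpr hζ
  set b : ℝ := 1 / (2 * T0) - a with hb_def
  have hb : 0 < b := by
    have h1 : 1 / (4 * TM) < 1 / (2 * T0) := by
      apply one_div_lt_one_div_of_lt
      · positivity
      · linarith
    rw [hb_def, ha_def]; linarith
  have hab : a + b = 1 / (2 * T0) := by rw [hb_def]; ring
  have hpb : (0:ℝ) ≤ a + b := by positivity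
  -- constants
  set K : ℝ := 2 * (a + b) ^ 2 * u0.1 ^ 2 / b + 2 * (a + b) ^ 2 * u0.2 ^ 2 / b
    with hK_def
  set CV : ℝ := 2 * max 1 (b / 2)⁻¹ * (ρ0 / (2 * Real.pi * T0) * Real.exp K)
    with hCV_def
  have hCVpos : 0 < CV := by
    have h1 : (0:ℝ) < max 1 (b / 2)⁻¹ := lt_of_lt_of_le one_pos (le_max_left _ _)
    have h2 : (0:ℝ) < ρ0 / (2 * Real.pi * T0) := by positivity
    positivity
  set δ : ℝ := a / (4 * (β / 2 + 1)) with hδ_def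
  have hδ : 0 < δ := by rw [hδ_def]; positivity
  set Mβ : ℝ := (max 1 δ⁻¹) ^ (β / 2) with hMβ_def
  have hMβpos : 0 < Mβ :=
    Real.rpow_pos_of_pos (lt_of_lt_of_le one_pos (le_max_left _ _)) _
  set M2 : ℝ := max 1 (a / 2)⁻¹ with hM2_def
  have hM2pos : (0:ℝ) < M2 := lt_of_lt_of_le one_pos (le_max_left _ _)
  set CU : ℝ := Real.sqrt (2 * M2) * Mβ with hCU_def
  have hCUpos : 0 < CU :=
    mul_pos (Real.sqrt_pos.mpr (by positivity)) hMβpos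
  refine ⟨Real.sqrt 2 * CV * CU,
    mul_pos (mul_pos (Real.sqrt_pos.mpr two_pos) hCVpos) hCUpos, fun v u => ?_⟩
  set r2 : ℝ := v.1 ^ 2 + v.2 ^ 2 with hr2_def
  set s2 : ℝ := u.1 ^ 2 + u.2 ^ 2 with hs2_def
  have hr2 : 0 ≤ r2 := by rw [hr2_def]; positivity
  have hs2 : 0 ≤ s2 := by rw [hs2_def]; positivity
  set x : ℝ := Real.sqrt r2 with hx_def
  set y : ℝ := Real.sqrt s2 with hy_def
  have hx0 : 0 ≤ x := Real.sqrt_nonneg _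
  have hy0 : 0 ≤ y := Real.sqrt_nonneg _
  have hx : x ^ 2 = r2 := Real.sq_sqrt hr2
  have hy : y ^ 2 = s2 := Real.sq_sqrt hs2
  set d2 : ℝ := (v.1 - u.1) ^ 2 + (v.2 - u.2) ^ 2 with hd2_def
  set P : ℝ := mu0 ρ0 T0 u0 v * Real.exp (a * r2) with hP_def
  set Q : ℝ := Real.exp (-(a * s2)) * (1 + s2) ^ (β / 2) with hQ_def
  set G : ℝ := Real.exp (-(a / 2) * u.1 ^ 2) * Real.exp (-(a / 2) * u.2 ^ 2)
    with hG_def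
  have hPpos : 0 < P := mul_pos (mu0_pos hρ0 hT0pos u0 v) (Real.exp_pos _)
  have hQ0 : 0 ≤ Q := by
    rw [hQ_def]; positivity
  have hG0 : 0 ≤ G := by rw [hG_def]; positivity
  -- rewrite LHS
  have hexp : Real.exp ((r2 - s2) / (4 * TM)) * Real.exp (ζ * (s2 - r2)) =
      Real.exp (a * r2) * Real.exp (-(a * s2)) := by
    rw [← Real.exp_add, ← Real.exp_add]
    congr 1
    rw [ha_def]
    field_simp
    ring
  have hL : kM1 ρ0 T0 TM u0 v u * Real.exp (ζ * (s2 - r2)) *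
      (1 + s2) ^ (β / 2) * (1 + r2) ^ (-(β / 2)) =
      Real.sqrt d2 * P * Q * (1 + r2) ^ (-(β / 2)) := by
    rw [kM1_eq hρ0 hT0pos hTM, hP_def, hQ_def,
      mul_assoc (Real.sqrt d2 * mu0 ρ0 T0 u0 v), hexp]
    ring
  rw [hL]
  -- bound on sqrt d2
  have hd : Real.sqrt d2 ≤ Real.sqrt 2 * ((1 + x) * (1 + y)) := by
    have hxv : x ^ 2 = v.1 ^ 2 + v.2 ^ 2 := hx.trans hr2_def
    have hyu : y ^ 2 = u.1 ^ 2 + u.2 ^ 2 := hy.trans hs2_def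
    have h1 : d2 ≤ (x + y) ^ 2 * 2 := by
      rw [hd2_def]
      linarith [mul_nonneg hx0 hy0, hxv, hyu, sq_nonneg (v.1 + u.1),
        sq_nonneg (v.2 + u.2)]
    have h2 : Real.sqrt d2 ≤ (x + y) * Real.sqrt 2 := by
      calc Real.sqrt d2 ≤ Real.sqrt ((x + y) ^ 2 * 2) := Real.sqrt_le_sqrt h1
        _ = (x + y) * Real.sqrt 2 := by
            rw [Real.sqrt_mul (by positivity), Real.sqrt_sq (by positivity)]
    have h3 : x + y ≤ (1 + x) * (1 + y) := by
      have h := mul_nonneg hx0 hy0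
      have expand : (1 + x) * (1 + y) = 1 + x + y + x * y := by ring
      rw [expand]; linarith
    calc Real.sqrt d2 ≤ (x + y) * Real.sqrt 2 := h2
      _ ≤ ((1 + x) * (1 + y)) * Real.sqrt 2 :=
          mul_le_mul_of_nonneg_right h3 (Real.sqrt_nonneg 2)
      _ = Real.sqrt 2 * ((1 + x) * (1 + y)) := by ring
  -- V claim
  have hV : (1 + x) ^ 2 * P ≤ CV := by
    have hE : P = ρ0 / (2 * Real.pi * T0) *
        Real.exp (a * r2 - ((v.1 - u0.1) ^ 2 + (v.2 - u0.2) ^ 2) / (2 * T0)) := by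
      rw [hP_def]; unfold mu0
      rw [mul_assoc, ← Real.exp_add]
      congr 1
      exact congrArg Real.exp (by ring)
    have h1 := quad_bound hb hpb v.1 u0.1
    have h2 := quad_bound hb hpb v.2 u0.2
    have hsplit : ((v.1 - u0.1) ^ 2 + (v.2 - u0.2) ^ 2) / (2 * T0) =
        (a + b) * (v.1 - u0.1) ^ 2 + (a + b) * (v.2 - u0.2) ^ 2 := by
      rw [hab]; field_simp
      try ring
    have hEbound : a * r2 - ((v.1 - u0.1) ^ 2 + (v.2 - u0.2) ^ 2) / (2 * T0) ≤
        -(b / 2) * r2 + K := by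
      rw [hsplit, hr2_def, hK_def]
      linarith [h1, h2]
    have h3 : 1 + r2 ≤ max 1 (b / 2)⁻¹ * Real.exp (b / 2 * r2) :=
      lin_le_exp (half_pos hb) hr2
    have h4 : (1 + x) ^ 2 ≤ 2 * (1 + r2) := by
      rw [← hx]; linarith [sq_nonneg (1 - x)]
    calc (1 + x) ^ 2 * P
        ≤ (2 * (max 1 (b / 2)⁻¹ * Real.exp (b / 2 * r2))) *
          (ρ0 / (2 * Real.pi * T0) * Real.exp (-(b / 2) * r2 + K)) := by
          rw [hE]
          apply mul_le_mul
          · linarith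
          · exact mul_le_mul_of_nonneg_left (Real.exp_le_exp.mpr hEbound)
              (by positivity)
          · positivity
          · positivity
      _ = CV := by
          have he : Real.exp (b / 2 * r2) * Real.exp (-(b / 2) * r2 + K) =
              Real.exp K := by
            rw [← Real.exp_add]; exact congrArg Real.exp (by ring)
          rw [hCV_def, ← he]; ring
  -- U claim
  have hU : (1 + y) * Q ≤ CU * G := by
    have h1 : 1 + s2 ≤ M2 * Real.exp (a / 2 * s2) := lin_le_exp (half_pos ha) hs2
    have h2 : (1 + y) ^ 2 ≤ 2 * M2 * Real.exp (a / 2 * s2) := by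
      have h2a : (1 + y) ^ 2 ≤ 2 * (1 + s2) := by
        rw [← hy]; linarith [sq_nonneg (1 - y)]
      calc (1 + y) ^ 2 ≤ 2 * (1 + s2) := h2a
        _ ≤ 2 * (M2 * Real.exp (a / 2 * s2)) := by linarith
        _ = 2 * M2 * Real.exp (a / 2 * s2) := by ring
    have h3 : 1 + y ≤ Real.sqrt (2 * M2 * Real.exp (a / 2 * s2)) :=
      (Real.le_sqrt' (by positivity)).mpr h2
    rw [Real.sqrt_mul (by positivity), ← Real.exp_half] at h3
    have h3' : 1 + y ≤ Real.sqrt (2 * M2) * Real.exp (a / 4 * s2) := by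
      rw [show a / 2 * s2 / 2 = a / 4 * s2 from by ring] at h3
      exact h3
    have hcoef : δ * (β / 2) ≤ a / 4 := by
      have hne : (β / 2 + 1) ≠ 0 := by positivity
      have : δ * (β / 2 + 1) = a / 4 := by
        rw [hδ_def]; field_simp
      linarith [hδ, this]
    have hβb : (1 + s2) ^ (β / 2) ≤ Mβ * Real.exp (a / 4 * s2) := by
      calc (1 + s2) ^ (β / 2) ≤ (max 1 δ⁻¹) ^ (β / 2) * Real.exp (δ * s2 * (β / 2)) :=
            rpow_le_exp' (by positivity) hδ hs2
        _ ≤ Mβ * Real.exp (a / 4 * s2) := by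
            rw [hMβ_def]
            apply mul_le_mul_of_nonneg_left _ hMβpos.le
            apply Real.exp_le_exp.mpr
            calc δ * s2 * (β / 2) = (δ * (β / 2)) * s2 := by ring
              _ ≤ a / 4 * s2 := mul_le_mul_of_nonneg_right hcoef hs2
    have hGs : G = Real.exp (-(a / 2) * s2) := by
      rw [hG_def, ← Real.exp_add]
      congr 1
      rw [hs2_def]; ring
    calc (1 + y) * Q = (1 + y) * ((1 + s2) ^ (β / 2)) * Real.exp (-(a * s2)) := by
          rw [hQ_def]; ring
      _ ≤ (Real.sqrt (2 * M2) * Real.exp (a / 4 * s2)) *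
            (Mβ * Real.exp (a / 4 * s2)) * Real.exp (-(a * s2)) := by
          apply mul_le_mul_of_nonneg_right _ (Real.exp_pos _).le
          apply mul_le_mul h3' hβb (by positivity) (by positivity)
      _ = CU * Real.exp (-(a / 2) * s2) := by
          have he2 : Real.exp (a / 4 * s2) * Real.exp (a / 4 * s2) *
              Real.exp (-(a * s2)) = Real.exp (-(a / 2) * s2) := by
            rw [← Real.exp_add, ← Real.exp_add]
            exact congrArg Real.exp (by ring)
          rw [hCU_def, ← he2]; ring
      _ = CU * G := by rw [hGs]
  -- assemble
  have h1x : (0:ℝ) < 1 + x := by positivity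
  have hPinv : (1 + x) * P ≤ CV * (1 + x)⁻¹ := by
    rw [← div_eq_mul_inv, le_div_iff₀ h1x]
    calc (1 + x) * P * (1 + x) = (1 + x) ^ 2 * P := by ring
      _ ≤ CV := hV
  have hRle : (1 + r2) ^ (-(β / 2)) ≤ 1 :=
    Real.rpow_le_one_of_one_le_of_nonpos (by linarith) (by linarith)
  have hR0 : (0:ℝ) ≤ (1 + r2) ^ (-(β / 2)) := Real.rpow_nonneg (by linarith) _
  calc Real.sqrt d2 * P * Q * (1 + r2) ^ (-(β / 2))
      ≤ Real.sqrt d2 * P * Q * 1 := by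
        apply mul_le_mul_of_nonneg_left hRle
        positivity
    _ = Real.sqrt d2 * P * Q := by ring
    _ ≤ (Real.sqrt 2 * ((1 + x) * (1 + y))) * P * Q := by
        apply mul_le_mul_of_nonneg_right _ hQ0
        exact mul_le_mul_of_nonneg_right hd hPpos.le
    _ = Real.sqrt 2 * ((1 + x) * P) * ((1 + y) * Q) := by ring
    _ ≤ Real.sqrt 2 * (CV * (1 + x)⁻¹) * (CU * G) := by
        apply mul_le_mul
        · exact mul_le_mul_of_nonneg_left hPinv (Real.sqrt_nonneg 2)
        · exact hU
        · positivity
        · positivity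
    _ = Real.sqrt 2 * CV * CU * (1 + x)⁻¹ * G := by ring

lemma kM1_nonneg (ρ0 T0 TM : ℝ) (u0 v u : ℝ × ℝ) : 0 ≤ kM1 ρ0 T0 TM u0 v u := by
  unfold kM1 k1
  positivity

/-- First half of the proof of Lemma 4.1: weighted integral bound for the rescaled loss
kernel `k_{M,1}`. -/
theorem rescaled_loss_kernel_estimate
    (TM T0 ρ0 : ℝ) (u0 : ℝ × ℝ) (β ζ : ℝ)
    (hTM : 0 < TM) (hT0 : TM < T0) (hT0' : T0 < 2 * TM) (hρ0 : 0 < ρ0)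
    (hβ : 0 ≤ β) (hζ0 : 0 < ζ) (hζ : ζ < 1 / (4 * TM)) :
    ∃ C > 0, ∀ v : ℝ × ℝ,
      (∫ u : ℝ × ℝ,
          kM1 ρ0 T0 TM u0 v u *
            Real.exp (ζ * ((u.1 ^ 2 + u.2 ^ 2) - (v.1 ^ 2 + v.2 ^ 2))) *
            (1 + (u.1 ^ 2 + u.2 ^ 2)) ^ (β / 2) *
            (1 + (v.1 ^ 2 + v.2 ^ 2)) ^ (-(β / 2))) ≤
        C * (1 + Real.sqrt (v.1 ^ 2 + v.2 ^ 2))⁻¹ := by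
  obtain ⟨C0, hC0, hpt⟩ := master TM T0 ρ0 u0 β ζ hTM hT0 hT0' hρ0 hβ hζ0 hζ
  have ha : 0 < 1 / (4 * TM) - ζ := sub_pos.mpr hζ
  have ha2 : 0 < (1 / (4 * TM) - ζ) / 2 := half_pos ha
  set G : ℝ × ℝ → ℝ := fun u =>
    Real.exp (-((1 / (4 * TM) - ζ) / 2) * u.1 ^ 2) *
      Real.exp (-((1 / (4 * TM) - ζ) / 2) * u.2 ^ 2) with hG_def
  have hGint : Integrable G := by
    rw [hG_def, Measure.volume_eq_prod]
    exact (integrable_exp_neg_mul_sq ha2).mul_prod (integrable_exp_neg_mul_sq ha2)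
  set J : ℝ := ∫ u : ℝ × ℝ, G u with hJ_def
  have hJ0 : 0 ≤ J := integral_nonneg fun u => by rw [hG_def]; positivity
  refine ⟨max 1 (C0 * J), lt_of_lt_of_le one_pos (le_max_left _ _), fun v => ?_⟩
  have hinv0 : 0 ≤ (1 + Real.sqrt (v.1 ^ 2 + v.2 ^ 2))⁻¹ := by positivity
  calc (∫ u : ℝ × ℝ,
          kM1 ρ0 T0 TM u0 v u *
            Real.exp (ζ * ((u.1 ^ 2 + u.2 ^ 2) - (v.1 ^ 2 + v.2 ^ 2))) *
            (1 + (u.1 ^ 2 + u.2 ^ 2)) ^ (β / 2) *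
            (1 + (v.1 ^ 2 + v.2 ^ 2)) ^ (-(β / 2)))
      ≤ ∫ u : ℝ × ℝ, (C0 * (1 + Real.sqrt (v.1 ^ 2 + v.2 ^ 2))⁻¹) * G u := by
        apply integral_mono_of_nonneg
        · exact Filter.Eventually.of_forall fun u => by
            have h1 := kM1_nonneg ρ0 T0 TM u0 v u
            positivity
        · exact hGint.const_mul _
        · exact Filter.Eventually.of_forall fun u => by
            have h := hpt v u
            rw [hG_def]
            calc kM1 ρ0 T0 TM u0 v u *
                Real.exp (ζ * ((u.1 ^ 2 + u.2 ^ 2) - (v.1 ^ 2 + v.2 ^ 2))) *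
                (1 + (u.1 ^ 2 + u.2 ^ 2)) ^ (β / 2) *
                (1 + (v.1 ^ 2 + v.2 ^ 2)) ^ (-(β / 2)) ≤
                C0 * (1 + Real.sqrt (v.1 ^ 2 + v.2 ^ 2))⁻¹ *
                  (Real.exp (-((1 / (4 * TM) - ζ) / 2) * u.1 ^ 2) *
                    Real.exp (-((1 / (4 * TM) - ζ) / 2) * u.2 ^ 2)) := h
              _ = (C0 * (1 + Real.sqrt (v.1 ^ 2 + v.2 ^ 2))⁻¹) *
                  (Real.exp (-((1 / (4 * TM) - ζ) / 2) * u.1 ^ 2) *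
                    Real.exp (-((1 / (4 * TM) - ζ) / 2) * u.2 ^ 2)) := by ring
    _ = (C0 * (1 + Real.sqrt (v.1 ^ 2 + v.2 ^ 2))⁻¹) * J := by
        rw [hJ_def]
        exact integral_const_mul _ _
    _ = (C0 * J) * (1 + Real.sqrt (v.1 ^ 2 + v.2 ^ 2))⁻¹ := by ring
    _ ≤ max 1 (C0 * J) * (1 + Real.sqrt (v.1 ^ 2 + v.2 ^ 2))⁻¹ :=
        mul_le_mul_of_nonneg_right (le_max_right _ _) hinv0
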